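/- With the setup of Delsarte's monomial map: Σ_{x ∈ (K^×)^s} ψ(F(x)) = (q−1)^{s−r} Σ_{χ ∈ G̃} Σ_{y ∈ (K^×)^r} χ(y) ψ(a·y), where F(x) = Σ_i a_i ∏_j x_j^{m_{ji}} and G̃ is the group of characters of (K^×)^r trivial on the image G of the monomial map φ. -/
import Mathlib


open Classical Finset

noncomputable instance (G : Type*) [CommGroup G] [Finite G] : Fintype (G →* ℂˣ) :=
  Fintype.ofInjective
    (fun χ : G →* ℂˣ => AddChar.toMonoidHomEquiv.symm
      ((Units.coeHom ℂ).comp (χ.comp (MulEquiv.multiplicativeAdditive G).toMonoidHom)))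
    (by
      intro χ₁ χ₂ h
      ext g
      have := congrArg (fun ψ => AddChar.toMonoidHomEquiv ψ
        (Multiplicative.ofAdd (Additive.ofMul g))) h
      simpa using this)

/-- Delsarte's monomial ("Veronese") map `phi(x) i = ∏ j, x j ^ m j i`. -/
def monomialMap (K : Type*) [Field K] (s r : ℕ) (m : Fin s → Fin r → ℕ) :
    (Fin s → Kˣ) →* (Fin r → Kˣ) where
  toFun x := fun i => ∏ j, x j ^ m j i
  map_one' := by funext i; simp
  map_mul' x y := by funext i; simp [mul_pow, Finset.prod_mul_distrib]

section Aux

variable {H : Type*} [CommGroup H] [Fintype H]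

private lemma neZero_exp_cast (Q : Type*) [Group Q] [Finite Q] :
    NeZero ((Monoid.exponent Q : ℕ) : ℂ) :=
  ⟨Nat.cast_ne_zero.mpr Monoid.exponent_ne_zero_of_finite⟩

/-- The characters of `H` trivial on `N` are in bijection with characters of `H ⧸ N`. -/
private noncomputable def trivEquiv (N : Subgroup H) :
    {χ : H →* ℂˣ // ∀ y ∈ N, χ y = 1} ≃ ((H ⧸ N) →* ℂˣ) where
  toFun χ := QuotientGroup.lift N χ.1 (fun y hy => χ.2 y hy)
  invFun φ := ⟨φ.comp (QuotientGroup.mk' N), fun y hy => by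
    simp [(QuotientGroup.eq_one_iff y).mpr hy]⟩
  left_inv χ := by ext x; rfl
  right_inv φ := MonoidHom.ext fun q => QuotientGroup.induction_on q fun x => rfl

private lemma card_triv (N : Subgroup H)
    [DecidablePred fun χ : H →* ℂˣ => ∀ y ∈ N, χ y = 1] :
    (Finset.univ.filter fun χ : H →* ℂˣ => ∀ y ∈ N, χ y = 1).card * Nat.card N
      = Fintype.card H := by
  have : NeZero ((Monoid.exponent (H ⧸ N) : ℕ) : ℂ) := neZero_exp_cast _
  obtain ⟨e2⟩ := CommGroup.monoidHom_mulEquiv_of_hasEnoughRootsOfUnity (H ⧸ N) ℂ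
  have h1 : (Finset.univ.filter fun χ : H →* ℂˣ => ∀ y ∈ N, χ y = 1).card
      = Nat.card (H ⧸ N) := by
    rw [← Fintype.card_subtype]
    rw [Fintype.card_congr ((trivEquiv N).trans e2.toEquiv)]
    exact (Nat.card_eq_fintype_card).symm
  rw [h1, ← Nat.card_eq_fintype_card]
  exact (Subgroup.card_eq_card_quotient_mul_card_subgroup N).symm

private lemma sum_triv (N : Subgroup H) (y : H)
    [DecidablePred fun χ : H →* ℂˣ => ∀ y ∈ N, χ y = 1] :
    ∑ χ ∈ (Finset.univ.filter fun χ : H →* ℂˣ => ∀ y ∈ N, χ y = 1), ((χ y : ℂˣ) : ℂ)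
      = if y ∈ N then
          (((Finset.univ.filter fun χ : H →* ℂˣ => ∀ y ∈ N, χ y = 1).card : ℕ) : ℂ)
        else 0 := by
  set S := Finset.univ.filter fun χ : H →* ℂˣ => ∀ y ∈ N, χ y = 1 with hS
  split_ifs with hy
  · rw [Finset.sum_congr rfl (fun χ hχ => ?_), Finset.sum_const, nsmul_eq_mul, mul_one]
    have := (Finset.mem_filter.mp hχ).2 y hy
    rw [this, Units.val_one]
  · have h1 : (QuotientGroup.mk' N) y ≠ 1 := by
      simpa [QuotientGroup.eq_one_iff] using hy
    have : NeZero ((Monoid.exponent (H ⧸ N) : ℕ) : ℂ) := neZero_exp_cast _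
    obtain ⟨φ, hφ⟩ := CommGroup.exists_apply_ne_one_of_hasEnoughRootsOfUnity (H ⧸ N) ℂ h1
    set χ₀ : H →* ℂˣ := φ.comp (QuotientGroup.mk' N) with hχ₀
    have hχ₀S : χ₀ ∈ S := by
      simp only [hS, Finset.mem_filter, Finset.mem_univ, true_and]
      intro z hz
      simp [hχ₀, (QuotientGroup.eq_one_iff z).mpr hz]
    have key : ∑ χ ∈ S, ((χ y : ℂˣ) : ℂ) = (χ₀ y : ℂ) * ∑ χ ∈ S, ((χ y : ℂˣ) : ℂ) := by
      rw [Finset.mul_sum]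
      refine Finset.sum_nbij' (fun χ => χ₀⁻¹ * χ) (fun χ => χ₀ * χ) ?_ ?_ ?_ ?_ ?_
      · intro χ hχ
        simp only [hS, Finset.mem_filter, Finset.mem_univ, true_and] at hχ ⊢
        intro z hz
        have h0 := (Finset.mem_filter.mp hχ₀S).2 z hz
        simp [hχ z hz, h0]
      · intro χ hχ
        simp only [hS, Finset.mem_filter, Finset.mem_univ, true_and] at hχ ⊢
        intro z hz
        have h0 := (Finset.mem_filter.mp hχ₀S).2 z hz
        simp [hχ z hz, h0]
      · intro χ _; exact mul_inv_cancel_left χ₀ χ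
      · intro χ _; exact inv_mul_cancel_left χ₀ χ
      · intro χ _
        show ((χ y : ℂˣ) : ℂ) = (χ₀ y : ℂ) * (((χ₀⁻¹ * χ) y : ℂˣ) : ℂ)
        simp only [MonoidHom.mul_apply, MonoidHom.inv_apply, Units.val_mul, Units.val_inv_eq_inv_val]
        have h0 : ((χ₀ y : ℂˣ) : ℂ) ≠ 0 := Units.ne_zero _
        field_simp
    have hne : (χ₀ y : ℂ) ≠ 1 := by
      intro h
      exact hφ (Units.ext (by simpa [hχ₀] using h))
    have : ((χ₀ y : ℂ) - 1) * ∑ χ ∈ S, ((χ y : ℂˣ) : ℂ) = 0 := by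
      rw [sub_mul, one_mul, ← key, sub_self]
    rcases mul_eq_zero.mp this with h | h
    · exact (hne (sub_eq_zero.mp h)).elim
    · exact h

private lemma card_fiber {G G' : Type*} [Group G] [Group G'] [Fintype G]
    (φ : G →* G') (x₀ : G) [DecidablePred fun x => φ x = φ x₀] :
    (Finset.univ.filter fun x => φ x = φ x₀).card = Nat.card φ.ker := by
  rw [← Fintype.card_subtype, Nat.card_eq_fintype_card]
  refine Fintype.card_congr ?_
  exact
    { toFun := fun x => ⟨x.1 * x₀⁻¹, by
        simp [MonoidHom.mem_ker, x.2]⟩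
      invFun := fun k => ⟨k.1 * x₀, by
        have := MonoidHom.mem_ker.mp k.2
        simp [this]⟩
      left_inv := fun x => by ext; simp [mul_assoc]
      right_inv := fun k => by ext; simp [mul_assoc] }

end Aux

set_option maxHeartbeats 1000000 in
/-- Delsarte §3, eq. (4): `∑_{x ∈ (K^×)^s} ψ(F(x))
= (q-1)^{s-r} ∑_{χ ∈ G̃} ∑_{y ∈ (K^×)^r} χ(y) ψ(a·y)`. -/
theorem Sbar_eq_char_sum (K : Type*) [Field K] [Fintype K]
    (s r : ℕ) (ψ : AddChar K ℂ) (hψ : ψ ≠ 1)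
    (a : Fin r → K) (ha : ∀ i, a i ≠ 0) (m : Fin s → Fin r → ℕ) :
    ∑ x : Fin s → Kˣ, ψ (∑ i, a i * ∏ j, (x j : K) ^ m j i)
      = ((Fintype.card K : ℂ) - 1) ^ ((s : ℤ) - (r : ℤ)) *
          ∑ χ ∈ Finset.univ.filter
              (fun χ : (Fin r → Kˣ) →* ℂˣ =>
                ∀ y ∈ (monomialMap K s r m).range, χ y = 1),
            ∑ y : Fin r → Kˣ, (χ y : ℂ) * ψ (∑ i, a i * (y i : K)) := by
  set φ := monomialMap K s r m with hφdef
  set N := φ.range with hN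
  set S := Finset.univ.filter
      (fun χ : (Fin r → Kˣ) →* ℂˣ => ∀ y ∈ N, χ y = 1) with hSdef
  set f : (Fin r → Kˣ) → ℂ := fun y => ψ (∑ i, a i * (y i : K)) with hf
  -- rewrite LHS as a sum of f over fibers of φ
  have hLHS : ∑ x : Fin s → Kˣ, ψ (∑ i, a i * ∏ j, (x j : K) ^ m j i)
      = (Nat.card φ.ker : ℂ) * ∑ y ∈ Finset.univ.filter (· ∈ N), f y := by
    have h1 : ∀ x : Fin s → Kˣ, ψ (∑ i, a i * ∏ j, (x j : K) ^ m j i) = f (φ x) := by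
      intro x
      simp only [hf, hφdef, monomialMap, MonoidHom.coe_mk, OneHom.coe_mk]
      congr 1
      refine Finset.sum_congr rfl fun i _ => ?_
      push_cast
      rfl
    rw [Finset.sum_congr rfl fun x _ => h1 x]
    rw [Finset.sum_comp f φ]
    have himg : Finset.univ.image φ = Finset.univ.filter (· ∈ N) := by
      ext y
      simp [hN, MonoidHom.mem_range, eq_comm]
    rw [himg, Finset.mul_sum]
    refine Finset.sum_congr rfl fun y hy => ?_
    obtain ⟨x₀, hx₀⟩ := (Finset.mem_filter.mp hy).2
    rw [← hx₀, card_fiber φ x₀, nsmul_eq_mul]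
  -- rewrite RHS inner sums via orthogonality
  have hRHS : ∑ χ ∈ S, ∑ y : Fin r → Kˣ, (χ y : ℂ) * ψ (∑ i, a i * (y i : K))
      = (S.card : ℂ) * ∑ y ∈ Finset.univ.filter (· ∈ N), f y := by
    rw [Finset.sum_comm]
    have h2 : ∀ y : Fin r → Kˣ, ∑ χ ∈ S, (χ y : ℂ) * ψ (∑ i, a i * (y i : K))
        = (if y ∈ N then (S.card : ℂ) else 0) * f y := by
      intro y
      rw [← Finset.sum_mul, hSdef, sum_triv N y, hf]
      split_ifs <;> rfl
    rw [Finset.sum_congr rfl fun y _ => h2 y]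
    simp only [ite_mul, zero_mul]
    rw [Finset.mul_sum, Finset.sum_filter]
  rw [hLHS, hRHS]
  -- now it remains to compare the scalar factors
  have hq1 : (1 : ℕ) ≤ Fintype.card K := Fintype.card_pos
  have hc : ((Fintype.card K : ℂ) - 1) = ((Fintype.card Kˣ : ℕ) : ℂ) := by
    rw [Fintype.card_units, Nat.cast_sub hq1, Nat.cast_one]
  have hcne : ((Fintype.card Kˣ : ℕ) : ℂ) ≠ 0 :=
    Nat.cast_ne_zero.mpr Fintype.card_pos.ne'
  have e1 : Nat.card φ.ker * Nat.card N = Fintype.card Kˣ ^ s := by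
    have := Subgroup.card_eq_card_quotient_mul_card_subgroup φ.ker
    have hq : Nat.card ((Fin s → Kˣ) ⧸ φ.ker) = Nat.card N :=
      Nat.card_congr (QuotientGroup.quotientKerEquivRange φ).toEquiv
    rw [hq] at this
    rw [mul_comm, ← this, Nat.card_eq_fintype_card, Fintype.card_fun]
    simp
  have e2 : S.card * Nat.card N = Fintype.card Kˣ ^ r := by
    rw [hSdef, card_triv N, Fintype.card_fun]
    simp
  have key : (Nat.card φ.ker : ℂ)
      = ((Fintype.card K : ℂ) - 1) ^ ((s : ℤ) - (r : ℤ)) * (S.card : ℂ) := by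
    rw [hc, zpow_sub₀ hcne, zpow_natCast, zpow_natCast, div_mul_eq_mul_div,
      eq_div_iff (pow_ne_zero r hcne)]
    have e1' : (Nat.card φ.ker : ℂ) * (Nat.card N : ℂ)
        = ((Fintype.card Kˣ : ℕ) : ℂ) ^ s := by exact_mod_cast congrArg Nat.cast e1
    have e2' : (S.card : ℂ) * (Nat.card N : ℂ)
        = ((Fintype.card Kˣ : ℕ) : ℂ) ^ r := by exact_mod_cast congrArg Nat.cast e2
    linear_combination (S.card : ℂ) * e1' - (Nat.card φ.ker : ℂ) * e2'
  rw [key]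
  ring
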